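/- Let λ ∈ P^Λ_n be a multipartition and let s, t be standard λ-tableaux. Then s dominates t (s ⊵ t) if and only if d(s) ≤ d(t) in the Bruhat order on S_n, where d(u) is the unique permutation with t^λ · d(u) = u. -/

import Mathlib

noncomputable section
open scoped Classical
namespace Paper

/-! ## Multipartitions and tableaux

A node is a triple (component, row, column), all 0-based.  A multicomposition of level
`l` is a function `Fin l → ℕ → ℕ` (component ↦ row ↦ row length).  Tableaux take values
in `{1,…,n}` (and `0` outside the diagram). -/

abbrev Node (l : ℕ) := Fin l × ℕ × ℕ

/-- the Young diagram of a multicomposition. -/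
def diag (l : ℕ) (lam : Fin l → ℕ → ℕ) : Set (Node l) :=
  {x | x.2.2 < lam x.1 x.2.1}

/-- `lam` is a multipartition of `n` (of level `l`). -/
def IsMultipartition (l n : ℕ) (lam : Fin l → ℕ → ℕ) : Prop :=
  (∀ c : Fin l, Antitone (lam c)) ∧ (∀ (c : Fin l) (r : ℕ), lam c r ≠ 0 → r < n) ∧
    (∑ c : Fin l, ∑ r ∈ Finset.range n, lam c r) = n

/-- the size of the `c`-th component of `lam` (whose rows are supported in `[0,n)`). -/
def compSize (l n : ℕ) (lam : Fin l → ℕ → ℕ) (c : Fin l) : ℕ :=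
  ∑ r ∈ Finset.range n, lam c r

/-- a `lam`-tableau: a bijection from the diagram of `lam` onto `{1,…,n}`,
normalised to vanish off the diagram. -/
def IsTableau (l n : ℕ) (lam : Fin l → ℕ → ℕ) (T : Node l → ℕ) : Prop :=
  Set.BijOn T (diag l lam) (Set.Icc 1 n) ∧ ∀ x, x ∉ diag l lam → T x = 0

/-- entries increase along rows and down columns. -/
def RowColIncreasing (l : ℕ) (lam : Fin l → ℕ → ℕ) (T : Node l → ℕ) : Prop :=
  (∀ (c : Fin l) (r j : ℕ), j + 1 < lam c r → T (c, r, j) < T (c, r, j + 1)) ∧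
  (∀ (c : Fin l) (r j : ℕ), j < lam c (r + 1) → T (c, r, j) < T (c, r + 1, j))

/-- `T` is a standard `lam`-tableau (in particular `lam` is a multipartition of `n`). -/
def IsStdTab (l n : ℕ) (lam : Fin l → ℕ → ℕ) (T : Node l → ℕ) : Prop :=
  IsMultipartition l n lam ∧ IsTableau l n lam T ∧ RowColIncreasing l lam T

/-- the initial tableau `t^λ`, filling `1,2,…,n` along the rows of the first component,
then the second component, and so on; it is the unique dominance-greatest standard
`λ`-tableau. -/
def initTab (l n : ℕ) (lam : Fin l → ℕ → ℕ) : Node l → ℕ := fun x =>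
  if x.2.2 < lam x.1 x.2.1 then
    (∑ c ∈ Finset.univ.filter (fun c : Fin l => c < x.1), compSize l n lam c) +
      (∑ r ∈ Finset.range x.2.1, lam x.1 r) + x.2.2 + 1
  else 0

/-- the shape of `T|_k`, the subtableau of entries `≤ k`. -/
def restShape (l : ℕ) (lam : Fin l → ℕ → ℕ) (T : Node l → ℕ) (k : ℕ) :
    Fin l → ℕ → ℕ :=
  fun c r => ((Finset.range (lam c r)).filter fun j => T (c, r, j) ≤ k).card

/-- the partial sum `∑_{c' < c} |λ^{(c')}| + ∑_{r < k} λ^{(c)}_r` used to define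
the dominance order. -/
def partialSum (l n : ℕ) (lam : Fin l → ℕ → ℕ) (c : Fin l) (k : ℕ) : ℕ :=
  (∑ c' ∈ Finset.univ.filter (fun c' : Fin l => c' < c), compSize l n lam c') +
    ∑ r ∈ Finset.range k, lam c r

/-- the dominance order `lam ⊵ mu` on multicompositions of the same level. -/
def ShapeDom (l n : ℕ) (lam mu : Fin l → ℕ → ℕ) : Prop :=
  ∀ (c : Fin l) (k : ℕ), partialSum l n mu c k ≤ partialSum l n lam c k

/-- the dominance order `S ⊵ T` on `λ`-tableaux: `Shape(S|_k) ⊵ Shape(T|_k)` for all `k`. -/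
def TabDom (l n : ℕ) (lam : Fin l → ℕ → ℕ) (S T : Node l → ℕ) : Prop :=
  ∀ k : ℕ, ShapeDom l n (restShape l lam S k) (restShape l lam T k)

/-- the adjacent transposition `s_r = (r, r+1)` on entries. -/
def sw (r : ℕ) : Equiv.Perm ℕ := Equiv.swap r (r + 1)

/-- the (right) action of a permutation of the entries on a tableau:
`(T·w)(x) = (T x)·w`. -/
def actT (l : ℕ) (T : Node l → ℕ) (w : Equiv.Perm ℕ) : Node l → ℕ := fun x => w (T x)

/-- the action of a word `s_{r_1} s_{r_2} ⋯ s_{r_m}` (leftmost letter acting first). -/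
def actWord (l : ℕ) (T : Node l → ℕ) (L : List ℕ) : Node l → ℕ :=
  L.foldl (fun U r => actT l U (sw r)) T

/-! ### The standard expression of `d(t)`

For a standard `λ`-tableau `t` let `t^{(i)}` be the tableau agreeing with `t` on the
entries `≥ i` and equal to the initial tableau of its shape on the entries `< i`;
then `t^{(i+1)} w_i = t^{(i)}` with `w_i = s_{a_i} s_{a_i + 1} ⋯ s_{i-1}` (or `w_i = 1`),
where `a_i` is the entry of `t^{(i+1)}` at the node of `t` containing `i`, and the
standard expression of `d(t)` is the concatenated word `w_n w_{n-1} ⋯ w_1`. -/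

/-- the interpolating tableau `t^{(i)}`. -/
def interT (l n : ℕ) (lam : Fin l → ℕ → ℕ) (T : Node l → ℕ) (i : ℕ) : Node l → ℕ :=
  fun x => if i ≤ T x then T x else initTab l n (restShape l lam T (i - 1)) x

/-- the entry `a_i` of `t^{(i+1)}` at the node of `t` containing `i`
(junk value `i`, giving the empty word, if there is no such node). -/
def aEntry (l n : ℕ) (lam : Fin l → ℕ → ℕ) (T : Node l → ℕ) (i : ℕ) : ℕ :=
  if h : ∃ x, x ∈ diag l lam ∧ T x = i then interT l n lam T (i + 1) h.choose else i

/-- the word `[a_i, a_i + 1, …, i-1]` of `w_i`. -/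
def wordAt (l n : ℕ) (lam : Fin l → ℕ → ℕ) (T : Node l → ℕ) (i : ℕ) : List ℕ :=
  List.range' (aEntry l n lam T i) (i - aEntry l n lam T i)

/-- the standard expression of `d(t)`, as the word `w_n w_{n-1} ⋯ w_1` read left to
right (leftmost letter first). -/
def stdWord (l n : ℕ) (lam : Fin l → ℕ → ℕ) (T : Node l → ℕ) : List ℕ :=
  ((List.range (n + 1)).reverse.map (wordAt l n lam T)).flatten

end Paper
end
namespace Paper

/-- membership in the copy of `S_n` in `Equiv.Perm ℕ`. -/
def InSymm (n : ℕ) (w : Equiv.Perm ℕ) : Prop :=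
  ∀ x : ℕ, x ∉ Finset.Icc 1 n → w x = x

/-- the Coxeter length of `w ∈ S_n`. -/
noncomputable def len (n : ℕ) (w : Equiv.Perm ℕ) : ℕ :=
  sInf {m : ℕ | ∃ L : List ℕ, (∀ r ∈ L, 1 ≤ r ∧ r < n) ∧ L.length = m ∧ w = (L.map sw).prod}

/-- `L` is a reduced expression of `w ∈ S_n` in the generators `s_1,…,s_{n-1}`. -/
def IsReducedWord (n : ℕ) (w : Equiv.Perm ℕ) (L : List ℕ) : Prop :=
  (∀ r ∈ L, 1 ≤ r ∧ r < n) ∧ w = (L.map sw).prod ∧ L.length = len n w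

/-- the Bruhat order on `S_n`: `u ≤ w` iff `u` is the product of a subword of a
reduced expression of `w`. -/
def BruhatLE (n : ℕ) (u w : Equiv.Perm ℕ) : Prop :=
  ∃ L : List ℕ, IsReducedWord n w L ∧ ∃ L' : List ℕ, L'.Sublist L ∧ u = (L'.map sw).prod

end Paper

namespace Paper

/-!
STATEMENT 5: for a multipartition `λ` of `n` and standard `λ`-tableaux `s, t`,
`s ⊵ t` if and only if `d(s) ≤ d(t)` in the Bruhat order, where `d(u)` is the
permutation with `t^λ · d(u) = u`.
-/
section Cnt

/-- count of `a ∈ [1,N]` with `v a ≤ m`. -/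
def cnt (v : Equiv.Perm ℕ) (N m : ℕ) : ℕ :=
  ((Finset.Icc 1 N).filter (fun a => v a ≤ m)).card

lemma cnt_zero (v : Equiv.Perm ℕ) (m : ℕ) : cnt v 0 m = 0 := by
  simp [cnt]

lemma cnt_succ (v : Equiv.Perm ℕ) (N m : ℕ) :
    cnt v (N + 1) m = cnt v N m + (if v (N + 1) ≤ m then 1 else 0) := by
  unfold cnt
  have h : Finset.Icc 1 (N + 1) = insert (N + 1) (Finset.Icc 1 N) := by
    ext a; simp [Finset.mem_Icc, Finset.mem_insert]; omega
  rw [h, Finset.filter_insert]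
  split_ifs with hv
  · rw [Finset.card_insert_of_notMem (by simp [Finset.mem_Icc])]
  · omega

lemma sw_apply (r x : ℕ) : sw r x = if x = r then r + 1 else if x = r + 1 then r else x := by
  simp [sw, Equiv.swap_apply_def]

lemma mul_sw_apply (v : Equiv.Perm ℕ) (r x : ℕ) : (v * sw r) x = v (sw r x) := rfl

lemma sw_mul_self (r : ℕ) : sw r * sw r = 1 := Equiv.swap_mul_self _ _

lemma sw_sw (r x : ℕ) : sw r (sw r x) = x := Equiv.swap_apply_self _ _ _

lemma cnt_mul_sw_lt (v : Equiv.Perm ℕ) (r N m : ℕ) (h : N < r) :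
    cnt (v * sw r) N m = cnt v N m := by
  unfold cnt
  congr 1
  apply Finset.filter_congr
  intro a ha
  rw [Finset.mem_Icc] at ha
  rw [mul_sw_apply, sw_apply, if_neg (by omega), if_neg (by omega)]

lemma cnt_mul_sw_ge (v : Equiv.Perm ℕ) (r N m : ℕ) (h1 : 1 ≤ r) (h : r + 1 ≤ N) :
    cnt (v * sw r) N m = cnt v N m := by
  unfold cnt
  apply Finset.card_bij' (fun a _ => sw r a) (fun a _ => sw r a) <;> intro a ha <;>
      rw [Finset.mem_filter, Finset.mem_Icc] at ha <;>
      obtain ⟨⟨ha1, ha2⟩, ha3⟩ := ha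
  · rw [Finset.mem_filter, Finset.mem_Icc]
    refine ⟨⟨?_, ?_⟩, ?_⟩
    · rw [sw_apply]; split_ifs <;> omega
    · rw [sw_apply]; split_ifs <;> omega
    · rwa [mul_sw_apply] at ha3
  · rw [Finset.mem_filter, Finset.mem_Icc]
    refine ⟨⟨?_, ?_⟩, ?_⟩
    · rw [sw_apply]; split_ifs <;> omega
    · rw [sw_apply]; split_ifs <;> omega
    · rw [mul_sw_apply, sw_sw]; exact ha3
  · exact sw_sw r a
  · exact sw_sw r a

lemma cnt_mul_sw_at (v : Equiv.Perm ℕ) (r m : ℕ) (h1 : 1 ≤ r) :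
    cnt (v * sw r) r m = cnt v (r - 1) m + (if v (r + 1) ≤ m then 1 else 0) := by
  obtain ⟨q, rfl⟩ : ∃ q, r = q + 1 := ⟨r - 1, by omega⟩
  rw [cnt_succ, cnt_mul_sw_lt v _ _ _ (by omega)]
  simp only [Nat.add_sub_cancel]
  congr 2
  rw [mul_sw_apply, sw_apply, if_pos rfl]

end Cnt

section Dom

/-- the dominance ("Ehresmann") matrix order on permutations. -/
def DomP (u w : Equiv.Perm ℕ) : Prop := ∀ N m, cnt w N m ≤ cnt u N m

lemma cnt_pred (v : Equiv.Perm ℕ) (r m : ℕ) (h1 : 1 ≤ r) :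
    cnt v r m = cnt v (r - 1) m + (if v r ≤ m then 1 else 0) := by
  obtain ⟨q, rfl⟩ : ∃ q, r = q + 1 := ⟨r - 1, by omega⟩
  rw [cnt_succ]; simp

lemma domP_mul_ascent (u w : Equiv.Perm ℕ) (r : ℕ) (h1 : 1 ≤ r)
    (hw : w r < w (r + 1)) (h : DomP u w) : DomP u (w * sw r) := by
  intro N m
  rcases eq_or_ne N r with rfl | hN
  · rw [cnt_mul_sw_at w N m h1]
    have e1 := h (N - 1) m
    have e2 := h N m
    rw [cnt_pred w N m h1] at e2
    rw [cnt_pred u N m h1] at e2 ⊢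
    split_ifs at e2 ⊢ <;> omega
  · rcases lt_or_ge N r with hlt | hge
    · rw [cnt_mul_sw_lt w r N m hlt]; exact h N m
    · rw [cnt_mul_sw_ge w r N m h1 (by omega)]; exact h N m

lemma domP_mul_mul (u w : Equiv.Perm ℕ) (r : ℕ) (h1 : 1 ≤ r)
    (hw : w r < w (r + 1)) (hu : u r < u (r + 1)) (h : DomP u w) :
    DomP (u * sw r) (w * sw r) := by
  intro N m
  rcases eq_or_ne N r with rfl | hN
  · rw [cnt_mul_sw_at w N m h1, cnt_mul_sw_at u N m h1]
    have e1 := h (N - 1) m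
    have e2 := h N m
    have e3 := h (N + 1) m
    rw [cnt_pred w N m h1] at e2
    rw [cnt_pred u N m h1] at e2
    rw [cnt_succ, cnt_succ, cnt_pred w N m h1, cnt_pred u N m h1] at e3
    split_ifs at e2 e3 ⊢ <;> omega
  · rcases lt_or_ge N r with hlt | hge
    · rw [cnt_mul_sw_lt w r N m hlt, cnt_mul_sw_lt u r N m hlt]; exact h N m
    · rw [cnt_mul_sw_ge w r N m h1 (by omega), cnt_mul_sw_ge u r N m h1 (by omega)]
      exact h N m

/-- the lifting property for the dominance matrix order. -/
lemma domP_lift (u w : Equiv.Perm ℕ) (r : ℕ) (h1 : 1 ≤ r)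
    (hw : w r < w (r + 1)) (h : DomP u (w * sw r)) :
    DomP (if u (r + 1) < u r then u * sw r else u) w := by
  intro N m
  rcases eq_or_ne N r with rfl | hN
  · have e1 := h (N - 1) m
    have e2 := h N m
    have e3 := h (N + 1) m
    rw [cnt_mul_sw_lt w N (N - 1) m (by omega)] at e1
    rw [cnt_mul_sw_at w N m h1, cnt_pred u N m h1] at e2
    rw [cnt_mul_sw_ge w N (N + 1) m h1 (by omega), cnt_succ, cnt_succ,
      cnt_pred w N m h1, cnt_pred u N m h1] at e3
    by_cases hd : u (N + 1) < u N
    · rw [if_pos hd, cnt_pred w N m h1, cnt_mul_sw_at u N m h1]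
      split_ifs at e2 e3 ⊢ <;> omega
    · have hu : u N < u (N + 1) := by
        rcases lt_trichotomy (u N) (u (N + 1)) with h' | h' | h'
        · exact h'
        · exact absurd (u.injective h') (by omega)
        · exact absurd h' hd
      rw [if_neg hd, cnt_pred w N m h1, cnt_pred u N m h1]
      split_ifs at e2 e3 ⊢ <;> omega
  · have hcnt : cnt (w * sw r) N m = cnt w N m := by
      rcases lt_or_ge N r with hlt | hge
      · exact cnt_mul_sw_lt w r N m hlt
      · exact cnt_mul_sw_ge w r N m h1 (by omega)
    split_ifs with hd
    · have : cnt (u * sw r) N m = cnt u N m := by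
        rcases lt_or_ge N r with hlt | hge
        · exact cnt_mul_sw_lt u r N m hlt
        · exact cnt_mul_sw_ge u r N m h1 (by omega)
      rw [this, ← hcnt]; exact h N m
    · rw [← hcnt]; exact h N m

end Dom

section Inv

/-- the set of inversions of `v` in the window `[1,n]`. -/
def invset (n : ℕ) (v : Equiv.Perm ℕ) : Finset (ℕ × ℕ) :=
  ((Finset.Icc 1 n) ×ˢ (Finset.Icc 1 n)).filter (fun p => p.1 < p.2 ∧ v p.2 < v p.1)

def invn (n : ℕ) (v : Equiv.Perm ℕ) : ℕ := (invset n v).card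

lemma mem_invset (n : ℕ) (v : Equiv.Perm ℕ) (p : ℕ × ℕ) :
    p ∈ invset n v ↔ (1 ≤ p.1 ∧ p.1 ≤ n) ∧ (1 ≤ p.2 ∧ p.2 ≤ n) ∧ p.1 < p.2 ∧ v p.2 < v p.1 := by
  simp [invset, Finset.mem_filter, Finset.mem_product, Finset.mem_Icc, and_assoc]

lemma sw_lt (r a b : ℕ) (hab : a < b) (hne : ¬(a = r ∧ b = r + 1)) : sw r a < sw r b := by
  rw [sw_apply, sw_apply]; split_ifs <;> omega

lemma invn_erase_eq (n : ℕ) (v : Equiv.Perm ℕ) (r : ℕ) (h1 : 1 ≤ r) (h2 : r < n) :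
    ((invset n (v * sw r)).erase (r, r + 1)).card = ((invset n v).erase (r, r + 1)).card := by
  apply Finset.card_bij' (fun p _ => (sw r p.1, sw r p.2)) (fun p _ => (sw r p.1, sw r p.2))
  · intro p hp
    rw [Finset.mem_erase, mem_invset] at hp
    obtain ⟨hne, ⟨hp1, hp2⟩, ⟨hp3, hp4⟩, hp5, hp6⟩ := hp
    have hne' : ¬(p.1 = r ∧ p.2 = r + 1) := by
      intro ⟨e1, e2⟩; exact hne (Prod.ext_iff.mpr ⟨e1, e2⟩)
    rw [Finset.mem_erase, mem_invset]
    refine ⟨?_, ?_, ?_, sw_lt r p.1 p.2 hp5 hne', ?_⟩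
    · intro hcon
      have e1 : sw r p.1 = r := congrArg Prod.fst hcon
      have e2 : sw r p.2 = r + 1 := congrArg Prod.snd hcon
      simp only [sw_apply] at e1 e2
      refine hne' ⟨?_, ?_⟩ <;> (split_ifs at e1 e2 <;> omega)
    · constructor <;> (simp only [sw_apply]; split_ifs <;> omega)
    · constructor <;> (simp only [sw_apply]; split_ifs <;> omega)
    · rw [mul_sw_apply, mul_sw_apply] at hp6; exact hp6
  · intro p hp
    rw [Finset.mem_erase, mem_invset] at hp
    obtain ⟨hne, ⟨hp1, hp2⟩, ⟨hp3, hp4⟩, hp5, hp6⟩ := hp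
    have hne' : ¬(p.1 = r ∧ p.2 = r + 1) := by
      intro ⟨e1, e2⟩; exact hne (Prod.ext_iff.mpr ⟨e1, e2⟩)
    rw [Finset.mem_erase, mem_invset]
    refine ⟨?_, ?_, ?_, sw_lt r p.1 p.2 hp5 hne', ?_⟩
    · intro hcon
      have e1 : sw r p.1 = r := congrArg Prod.fst hcon
      have e2 : sw r p.2 = r + 1 := congrArg Prod.snd hcon
      simp only [sw_apply] at e1 e2
      refine hne' ⟨?_, ?_⟩ <;> (split_ifs at e1 e2 <;> omega)
    · constructor <;> (simp only [sw_apply]; split_ifs <;> omega)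
    · constructor <;> (simp only [sw_apply]; split_ifs <;> omega)
    · rw [mul_sw_apply, mul_sw_apply, sw_sw, sw_sw]; exact hp6
  · intro p _; rw [sw_sw, sw_sw]
  · intro p _; rw [sw_sw, sw_sw]

lemma card_with_pivot {α : Type*} [DecidableEq α] (s : Finset α) (a : α) :
    s.card = (s.erase a).card + (if a ∈ s then 1 else 0) := by
  split_ifs with h
  · rw [Finset.card_erase_of_mem h]; have := Finset.card_pos.mpr ⟨a, h⟩; omega
  · rw [Finset.erase_eq_of_notMem h]; omega

lemma pivot_mem_invset_mul (n : ℕ) (v : Equiv.Perm ℕ) (r : ℕ) (h1 : 1 ≤ r) (h2 : r < n) :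
    ((r, r + 1) ∈ invset n (v * sw r)) ↔ v r < v (r + 1) := by
  rw [mem_invset]
  simp only [mul_sw_apply]
  rw [show sw r r = r + 1 by rw [sw_apply]; simp,
      show sw r (r + 1) = r by rw [sw_apply]; split_ifs <;> omega]
  constructor
  · rintro ⟨_, _, _, h⟩; exact h
  · intro h; exact ⟨⟨by omega, by omega⟩, ⟨by omega, by omega⟩, by omega, h⟩

lemma pivot_mem_invset (n : ℕ) (v : Equiv.Perm ℕ) (r : ℕ) (h1 : 1 ≤ r) (h2 : r < n) :
    ((r, r + 1) ∈ invset n v) ↔ v (r + 1) < v r := by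
  rw [mem_invset]
  constructor
  · rintro ⟨_, _, _, h⟩; exact h
  · intro h; exact ⟨⟨by omega, by omega⟩, ⟨by omega, by omega⟩, by omega, h⟩

lemma invn_mul_sw_ascent (n : ℕ) (v : Equiv.Perm ℕ) (r : ℕ) (h1 : 1 ≤ r) (h2 : r < n)
    (ha : v r < v (r + 1)) : invn n (v * sw r) = invn n v + 1 := by
  unfold invn
  rw [card_with_pivot (invset n (v * sw r)) (r, r + 1),
      card_with_pivot (invset n v) (r, r + 1), invn_erase_eq n v r h1 h2,
      if_pos ((pivot_mem_invset_mul n v r h1 h2).mpr ha),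
      if_neg (by rw [pivot_mem_invset n v r h1 h2]; omega)]

lemma invn_mul_sw_descent (n : ℕ) (v : Equiv.Perm ℕ) (r : ℕ) (h1 : 1 ≤ r) (h2 : r < n)
    (ha : v (r + 1) < v r) : invn n v = invn n (v * sw r) + 1 := by
  unfold invn
  rw [card_with_pivot (invset n (v * sw r)) (r, r + 1),
      card_with_pivot (invset n v) (r, r + 1), invn_erase_eq n v r h1 h2,
      if_pos ((pivot_mem_invset n v r h1 h2).mpr ha),
      if_neg (by rw [pivot_mem_invset_mul n v r h1 h2]; omega)]

lemma invn_mul_sw_le (n : ℕ) (v : Equiv.Perm ℕ) (r : ℕ) (h1 : 1 ≤ r) (h2 : r < n) :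
    invn n (v * sw r) ≤ invn n v + 1 := by
  rcases lt_trichotomy (v r) (v (r + 1)) with h | h | h
  · rw [invn_mul_sw_ascent n v r h1 h2 h]
  · exact absurd (v.injective h) (by omega)
  · have := invn_mul_sw_descent n v r h1 h2 h; omega

end Inv

section Words

lemma exists_descent (n : ℕ) (v : Equiv.Perm ℕ) (h : invn n v ≠ 0) :
    ∃ r, 1 ≤ r ∧ r < n ∧ v (r + 1) < v r := by
  by_contra hcon
  push_neg at hcon
  have hasc : ∀ r, 1 ≤ r → r < n → v r < v (r + 1) := by
    intro r hr1 hr2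
    rcases lt_trichotomy (v r) (v (r + 1)) with h' | h' | h'
    · exact h'
    · exact absurd (v.injective h') (by omega)
    · exact absurd h' (by have := hcon r hr1 hr2; omega)
  have hmono : ∀ b a, 1 ≤ a → a < b → b ≤ n → v a < v b := by
    intro b
    induction b with
    | zero => omega
    | succ b ih =>
      intro a ha1 ha2 ha3
      rcases eq_or_lt_of_le (Nat.lt_succ_iff.mp ha2) with rfl | hab
      · exact hasc a ha1 (by omega)
      · exact lt_trans (ih a ha1 hab (by omega)) (hasc b (by omega) (by omega))
  apply h
  unfold invn
  rw [Finset.card_eq_zero, Finset.eq_empty_iff_forall_notMem]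
  intro p hp
  rw [mem_invset] at hp
  obtain ⟨⟨h1, h2⟩, ⟨h3, h4⟩, h5, h6⟩ := hp
  exact absurd (hmono p.2 p.1 h1 h5 h4) (by omega)

lemma insymm_window (n : ℕ) (v : Equiv.Perm ℕ) (hv : InSymm n v) (a : ℕ)
    (ha : a ∈ Finset.Icc 1 n) : v a ∈ Finset.Icc 1 n := by
  by_contra hcon
  have := hv (v a) hcon
  have := v.injective this
  rw [this] at hcon
  exact hcon ha

lemma eq_one_of_invn_zero (n : ℕ) (v : Equiv.Perm ℕ) (hv : InSymm n v)
    (h : invn n v = 0) : v = 1 := by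
  have hmono : ∀ r, 1 ≤ r → r < n → v r < v (r + 1) := by
    intro r h1 h2
    rcases lt_trichotomy (v r) (v (r + 1)) with h' | h' | h'
    · exact h'
    · exact absurd (v.injective h') (by omega)
    · exfalso
      have : (r, r + 1) ∈ invset n v := by
        rw [mem_invset]; exact ⟨⟨by omega, by omega⟩, ⟨by omega, by omega⟩, by omega, h'⟩
      unfold invn at h
      rw [Finset.card_eq_zero] at h
      simp [h] at this
  have hwin : ∀ a, 1 ≤ a → a ≤ n → 1 ≤ v a ∧ v a ≤ n := by
    intro a h1 h2
    have := insymm_window n v hv a (by rw [Finset.mem_Icc]; omega)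
    rw [Finset.mem_Icc] at this; exact this
  have hub : ∀ d a, 1 ≤ a → a ≤ n → n - a ≤ d → v a ≤ a := by
    intro d
    induction d with
    | zero => intro a h1 h2 h3
              have : a = n := by omega
              subst this
              exact (hwin a h1 h2).2
    | succ d ih =>
      intro a h1 h2 h3
      rcases eq_or_lt_of_le h2 with rfl | hlt
      · exact (hwin a h1 le_rfl).2
      · have := ih (a + 1) (by omega) (by omega) (by omega)
        have := hmono a h1 (by omega)
        omega
  have hlb : ∀ a, 1 ≤ a → a ≤ n → a ≤ v a := by
    intro a
    induction a with
    | zero => omega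
    | succ a ih =>
      intro h1 h2
      rcases Nat.eq_zero_or_pos a with rfl | ha
      · exact (hwin 1 le_rfl h2).1
      · have := ih (by omega) (by omega)
        have := hmono a (by omega) (by omega)
        omega
  ext a
  rcases Nat.eq_zero_or_pos a with rfl | ha
  · exact hv 0 (by simp)
  rcases le_or_gt a n with h2 | h2
  · have := hub (n - a) a ha h2 le_rfl
    have := hlb a ha h2
    simpa using by omega
  · simpa using hv a (by rw [Finset.mem_Icc]; omega)

lemma invn_one (n : ℕ) : invn n 1 = 0 := by
  unfold invn
  rw [Finset.card_eq_zero, Finset.eq_empty_iff_forall_notMem]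
  intro p hp
  rw [mem_invset] at hp
  simp only [Equiv.Perm.one_apply] at hp
  omega

lemma prod_append_sw (M : List ℕ) (r : ℕ) :
    (((M ++ [r]).map sw).prod) = ((M.map sw).prod) * sw r := by
  rw [List.map_append, List.prod_append]; simp

lemma invn_word_le (n : ℕ) : ∀ (L : List ℕ), (∀ r ∈ L, 1 ≤ r ∧ r < n) →
    invn n ((L.map sw).prod) ≤ L.length := by
  intro L
  induction L using List.reverseRecOn with
  | nil => intro _; simp [invn_one]
  | append_singleton M r ih =>
    intro hL
    have hr := hL r (by simp)
    have hM : ∀ r' ∈ M, 1 ≤ r' ∧ r' < n := fun r' h' => hL r' (by simp [h'])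
    rw [prod_append_sw]
    have := invn_mul_sw_le n ((M.map sw).prod) r hr.1 hr.2
    have := ih hM
    simp only [List.length_append, List.length_singleton]
    omega

lemma insymm_one (n : ℕ) : InSymm n (1 : Equiv.Perm ℕ) := fun x _ => rfl

lemma insymm_mul (n : ℕ) (u v : Equiv.Perm ℕ) (hu : InSymm n u) (hv : InSymm n v) :
    InSymm n (u * v) := by
  intro x hx
  rw [Equiv.Perm.mul_apply, hv x hx, hu x hx]

lemma insymm_sw (n r : ℕ) (h1 : 1 ≤ r) (h2 : r < n) : InSymm n (sw r) := by
  intro x hx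
  rw [Finset.mem_Icc] at hx
  rw [sw_apply, if_neg (by omega), if_neg (by omega)]

lemma word_of_insymm (n : ℕ) (v : Equiv.Perm ℕ) (hv : InSymm n v) :
    ∃ L : List ℕ, (∀ r ∈ L, 1 ≤ r ∧ r < n) ∧ L.length = invn n v ∧ v = (L.map sw).prod := by
  generalize hk : invn n v = k
  induction k generalizing v with
  | zero => exact ⟨[], by simp, by simp, by simp [eq_one_of_invn_zero n v hv hk]⟩
  | succ k ih =>
    obtain ⟨r, hr1, hr2, hd⟩ := exists_descent n v (by omega)
    have hstep := invn_mul_sw_descent n v r hr1 hr2 hd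
    have hv' : InSymm n (v * sw r) := insymm_mul n v (sw r) hv (insymm_sw n r hr1 hr2)
    obtain ⟨L, hL1, hL2, hL3⟩ := ih (v * sw r) hv' (by omega)
    refine ⟨L ++ [r], ?_, ?_, ?_⟩
    · intro r' h'
      rcases List.mem_append.mp h' with h' | h'
      · exact hL1 r' h'
      · simp at h'; subst h'; exact ⟨hr1, hr2⟩
    · simp only [List.length_append, List.length_singleton]; omega
    · rw [prod_append_sw, ← hL3, mul_assoc, sw_mul_self, mul_one]

lemma len_eq_invn (n : ℕ) (v : Equiv.Perm ℕ) (hv : InSymm n v) : len n v = invn n v := by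
  unfold len
  apply le_antisymm
  · apply Nat.sInf_le
    obtain ⟨L, h1, h2, h3⟩ := word_of_insymm n v hv
    exact ⟨L, h1, h2, h3⟩
  · apply le_csInf
    · obtain ⟨L, h1, h2, h3⟩ := word_of_insymm n v hv
      exact ⟨_, L, h1, h2, h3⟩
    · rintro m ⟨L, h1, h2, h3⟩
      rw [← h2, h3]
      exact invn_word_le n L h1

end Words

section Exchange

lemma exchange (M : List ℕ) : ∀ p q : ℕ, p < q →
    ((M.map sw).prod) q < ((M.map sw).prod) p →
    ∃ i < M.length, ((M.map sw).prod) * Equiv.swap p q = (((M.eraseIdx i).map sw).prod) := by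
  induction M using List.reverseRecOn with
  | nil => intro p q hpq hv; simp at hv; omega
  | append_singleton M r ih =>
    intro p q hpq hv
    rw [prod_append_sw] at hv
    by_cases hc : p = r ∧ q = r + 1
    · obtain ⟨rfl, rfl⟩ := hc
      refine ⟨M.length, by simp, ?_⟩
      have he : (M ++ [p]).eraseIdx M.length = M := by
        rw [List.eraseIdx_append_of_length_le le_rfl]
        simp
      rw [he, prod_append_sw, show Equiv.swap p (p + 1) = sw p from rfl, mul_assoc,
        sw_mul_self, mul_one]
    · set p' := sw r p with hp'
      set q' := sw r q with hq'
      have hp'q' : p' < q' := sw_lt r p q hpq hc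
      have hvp : ((M.map sw).prod) q' < ((M.map sw).prod) p' := by
        rw [hp', hq']
        exact hv
      obtain ⟨i, hi, hprod⟩ := ih p' q' hp'q' hvp
      refine ⟨i, by simp; omega, ?_⟩
      have hcomm : sw r * Equiv.swap p q = Equiv.swap p' q' * sw r := by
        rw [hp', hq']
        exact Equiv.mul_swap_eq_swap_mul (sw r) p q
      rw [prod_append_sw, mul_assoc, hcomm, ← mul_assoc, hprod,
        List.eraseIdx_append_of_lt_length hi, prod_append_sw]

lemma reduced_append (n : ℕ) (M : List ℕ) (r : ℕ)
    (hlet : ∀ r' ∈ M ++ [r], 1 ≤ r' ∧ r' < n)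
    (hred : (M ++ [r]).length = invn n (((M ++ [r]).map sw).prod)) :
    M.length = invn n ((M.map sw).prod) ∧
      ((M.map sw).prod) r < ((M.map sw).prod) (r + 1) := by
  have hr := hlet r (by simp)
  have hM : ∀ r' ∈ M, 1 ≤ r' ∧ r' < n := fun r' h' => hlet r' (by simp [h'])
  rw [prod_append_sw] at hred
  simp only [List.length_append, List.length_singleton] at hred
  set w' := (M.map sw).prod with hw'
  have hle := invn_word_le n M hM
  rw [← hw'] at hle
  have hstep := invn_mul_sw_le n w' r hr.1 hr.2
  rcases lt_trichotomy (w' r) (w' (r + 1)) with h' | h' | h'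
  · have := invn_mul_sw_ascent n w' r hr.1 hr.2 h'
    exact ⟨by omega, h'⟩
  · exact absurd (w'.injective h') (by omega)
  · have := invn_mul_sw_descent n w' r hr.1 hr.2 h'
    omega

lemma subprod_dom (n : ℕ) : ∀ (L : List ℕ), (∀ r ∈ L, 1 ≤ r ∧ r < n) →
    L.length = invn n ((L.map sw).prod) →
    ∀ L' : List ℕ, L'.Sublist L → DomP ((L'.map sw).prod) ((L.map sw).prod) := by
  intro L
  induction L using List.reverseRecOn with
  | nil =>
    intro _ _ L' hL'
    rw [List.sublist_nil.mp hL']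
    exact fun N m => le_rfl
  | append_singleton M r ih =>
    intro hlet hred L' hL'
    obtain ⟨hMred, hasc⟩ := reduced_append n M r hlet hred
    have hr := hlet r (by simp)
    have hM : ∀ r' ∈ M, 1 ≤ r' ∧ r' < n := fun r' h' => hlet r' (by simp [h'])
    rw [prod_append_sw]
    rcases List.sublist_append_iff.mp hL' with ⟨M', t, rfl, hM', ht⟩
    rcases List.sublist_singleton.mp ht with rfl | rfl
    · rw [List.append_nil]
      exact domP_mul_ascent _ _ r hr.1 hasc (ih hM hMred M' hM')
    · rw [prod_append_sw]
      set u' := (M'.map sw).prod with hu'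
      rcases lt_trichotomy (u' r) (u' (r + 1)) with h' | h' | h'
      · exact domP_mul_mul _ _ r hr.1 hasc h' (ih hM hMred M' hM')
      · exact absurd (u'.injective h') (by omega)
      · obtain ⟨i, hi, hprod⟩ := exchange M' r (r + 1) (by omega) h'
        rw [show Equiv.swap r (r + 1) = sw r from rfl] at hprod
        rw [hprod]
        apply domP_mul_ascent _ _ r hr.1 hasc
        exact ih hM hMred (M'.eraseIdx i) ((List.eraseIdx_sublist M' i).trans hM')

end Exchange

section BruhatDom

lemma bruhat_to_dom (n : ℕ) (u w : Equiv.Perm ℕ) (hw : InSymm n w)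
    (h : BruhatLE n u w) : DomP u w := by
  obtain ⟨L, ⟨hlet, hprod, hlen⟩, L', hsub, hu⟩ := h
  rw [len_eq_invn n w hw] at hlen
  rw [hu, hprod]
  exact subprod_dom n L hlet (by rw [← hprod]; exact hlen) L' hsub

lemma cnt_id (N m : ℕ) : cnt 1 N m = min N m := by
  unfold cnt
  have : (Finset.Icc 1 N).filter (fun a => (1 : Equiv.Perm ℕ) a ≤ m) = Finset.Icc 1 (min N m) := by
    ext a; rw [Finset.mem_filter]; simp only [Finset.mem_filter, Finset.mem_Icc, Equiv.Perm.one_apply]; omega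
  rw [this, Nat.card_Icc]
  omega

lemma cnt_le_min (n : ℕ) (v : Equiv.Perm ℕ) (hv : InSymm n v) (N m : ℕ) :
    cnt v N m ≤ min N m := by
  apply le_min
  · calc cnt v N m ≤ (Finset.Icc 1 N).card := Finset.card_filter_le _ _
    _ = N := by rw [Nat.card_Icc]; omega
  · have key : ((Finset.Icc 1 N).filter (fun a => v a ≤ m)).card ≤ (Finset.Icc 1 m).card := by
      apply Finset.card_le_card_of_injOn (fun a => v a)
      · intro a ha
        rw [Finset.mem_coe, Finset.mem_filter, Finset.mem_Icc] at ha
        obtain ⟨⟨h1, h2⟩, h3⟩ := ha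
        rw [Finset.mem_coe, Finset.mem_Icc]; beta_reduce
        refine ⟨?_, h3⟩
        rcases le_or_gt a n with h4 | h4
        · have := insymm_window n v hv a (by rw [Finset.mem_Icc]; omega)
          rw [Finset.mem_Icc] at this; omega
        · rw [hv a (by rw [Finset.mem_Icc]; omega)]; omega
      · intro a _ b _ hab
        exact v.injective hab
    calc cnt v N m ≤ (Finset.Icc 1 m).card := key
      _ = m := by rw [Nat.card_Icc]; omega

lemma eq_one_of_dom_one (n : ℕ) (u : Equiv.Perm ℕ) (hu : InSymm n u)
    (h : DomP u 1) : u = 1 := by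
  have hcnt : ∀ N m, cnt u N m = min N m := by
    intro N m
    have h1 := h N m
    rw [cnt_id] at h1
    have h2 := cnt_le_min n u hu N m
    omega
  ext a
  rcases Nat.eq_zero_or_pos a with rfl | ha
  · simpa using hu 0 (by simp)
  obtain ⟨b, rfl⟩ : ∃ b, a = b + 1 := ⟨a - 1, by omega⟩
  have e1 := hcnt (b + 1) (b + 1)
  have e2 := hcnt (b + 1) b
  have e3 := hcnt b (b + 1)
  have e4 := hcnt b b
  rw [cnt_succ] at e1 e2
  simp only [Equiv.Perm.one_apply]
  split_ifs at e1 e2 <;> omega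

lemma dom_to_bruhat (n : ℕ) (u w : Equiv.Perm ℕ) (hu : InSymm n u) (hw : InSymm n w)
    (h : DomP u w) : BruhatLE n u w := by
  generalize hk : invn n w = k
  induction k generalizing u w with
  | zero =>
    have hw1 : w = 1 := eq_one_of_invn_zero n w hw hk
    subst hw1
    have hu1 : u = 1 := eq_one_of_dom_one n u hu h
    subst hu1
    refine ⟨[], ⟨by simp, by simp, ?_⟩, [], List.Sublist.refl _, by simp⟩
    rw [len_eq_invn n 1 (insymm_one n), invn_one]
    simp
  | succ k ih =>
    obtain ⟨r, hr1, hr2, hd⟩ := exists_descent n w (by omega)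
    set w' := w * sw r with hw'def
    have hw'sym : InSymm n w' := insymm_mul n w (sw r) hw (insymm_sw n r hr1 hr2)
    have hinv' : invn n w' = k := by
      have h2 := invn_mul_sw_descent n w r hr1 hr2 hd
      rw [← hw'def] at h2
      omega
    have hw'asc : w' r < w' (r + 1) := by
      rw [hw'def, mul_sw_apply, mul_sw_apply,
        show sw r r = r + 1 by rw [sw_apply]; simp,
        show sw r (r + 1) = r by rw [sw_apply]; split_ifs <;> omega]
      exact hd
    have hw_eq : w = w' * sw r := by
      rw [hw'def, mul_assoc, sw_mul_self, mul_one]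
    have hlift : DomP (if u (r + 1) < u r then u * sw r else u) w' := by
      apply domP_lift u w' r hr1 hw'asc
      rw [← hw_eq]
      exact h
    set u' := if u (r + 1) < u r then u * sw r else u with hu'def
    have hu'sym : InSymm n u' := by
      rw [hu'def]
      split_ifs
      · exact insymm_mul n u (sw r) hu (insymm_sw n r hr1 hr2)
      · exact hu
    obtain ⟨L, ⟨hlet, hprod, hlen⟩, L'', hsub, huprod⟩ := ih u' w' hu'sym hw'sym hlift hinv'
    have hlenL : L.length = k := by
      rw [hlen, len_eq_invn n w' hw'sym, hinv']
    refine ⟨L ++ [r], ⟨?_, ?_, ?_⟩, ?_⟩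
    · intro r' h'
      rcases List.mem_append.mp h' with h' | h'
      · exact hlet r' h'
      · simp at h'; subst h'; exact ⟨hr1, hr2⟩
    · rw [prod_append_sw, ← hprod, ← hw_eq]
    · rw [len_eq_invn n w hw, hk]
      simp only [List.length_append, List.length_singleton]
      omega
    · rw [hu'def] at huprod
      split_ifs at huprod with hcase
      · refine ⟨L'' ++ [r], List.Sublist.append hsub (List.Sublist.refl _), ?_⟩
        rw [prod_append_sw, ← huprod]
        rw [mul_assoc, sw_mul_self, mul_one]
      · exact ⟨L'', hsub.trans (List.sublist_append_left L [r]), huprod⟩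

lemma bruhat_iff_dom (n : ℕ) (u w : Equiv.Perm ℕ) (hu : InSymm n u) (hw : InSymm n w) :
    BruhatLE n u w ↔ DomP u w :=
  ⟨bruhat_to_dom n u w hw, dom_to_bruhat n u w hu hw⟩

end BruhatDom

section Tableau

variable {l n : ℕ} {lam : Fin l → ℕ → ℕ}

lemma lam_row_zero (hlam : IsMultipartition l n lam) (c : Fin l) (r : ℕ) (h : n ≤ r) :
    lam c r = 0 := by
  by_contra h'
  have := hlam.2.1 c r h'
  omega

lemma comp_total (hlam : IsMultipartition l n lam) :
    ∑ c : Fin l, compSize l n lam c = n := hlam.2.2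

lemma lam_le_n (hlam : IsMultipartition l n lam) (c : Fin l) (r : ℕ) : lam c r ≤ n := by
  rcases le_or_gt n r with h | h
  · rw [lam_row_zero hlam c r h]; omega
  · calc lam c r ≤ compSize l n lam c :=
          Finset.single_le_sum (fun _ _ => Nat.zero_le _) (Finset.mem_range.mpr h)
    _ ≤ ∑ c' : Fin l, compSize l n lam c' :=
          Finset.single_le_sum (fun _ _ => Nat.zero_le _) (Finset.mem_univ c)
    _ = n := comp_total hlam

lemma rowsum_le_comp (hlam : IsMultipartition l n lam) (c : Fin l) (k : ℕ) :
    ∑ r ∈ Finset.range k, lam c r ≤ compSize l n lam c := by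
  rcases le_or_gt k n with h | h
  · exact Finset.sum_le_sum_of_subset (Finset.range_subset_range.mpr h)
  · rw [show ∑ r ∈ Finset.range k, lam c r = ∑ r ∈ Finset.range n, lam c r from
      (Finset.sum_subset (Finset.range_subset_range.mpr (by omega)) (fun x hx hnx => by
        refine lam_row_zero hlam c x ?_
        simp only [Finset.mem_range] at hx hnx
        omega)).symm]
    exact le_rfl

lemma partialSum_mono (lam : Fin l → ℕ → ℕ) (c : Fin l) {k k' : ℕ} (h : k ≤ k') :
    partialSum l n lam c k ≤ partialSum l n lam c k' :=
  Nat.add_le_add_left (Finset.sum_le_sum_of_subset (Finset.range_subset_range.mpr h)) _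

lemma filter_le_eq_insert (c : Fin l) :
    Finset.univ.filter (fun c' : Fin l => c' ≤ c) =
      insert c (Finset.univ.filter (fun c' : Fin l => c' < c)) := by
  ext a
  simp only [Finset.mem_filter, Finset.mem_univ, true_and, Finset.mem_insert]
  constructor
  · intro h; rcases eq_or_lt_of_le h with h | h
    · exact Or.inl h
    · exact Or.inr h
  · rintro (rfl | h)
    · exact le_rfl
    · exact le_of_lt h

lemma partialSum_le_blockLe (hlam : IsMultipartition l n lam) (c : Fin l) (k : ℕ) :
    partialSum l n lam c k ≤ ∑ c' ∈ Finset.univ.filter (fun c' : Fin l => c' ≤ c),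
      compSize l n lam c' := by
  rw [filter_le_eq_insert c, Finset.sum_insert (by simp)]
  unfold partialSum
  have := rowsum_le_comp hlam c k
  omega

lemma partialSum_le_n (hlam : IsMultipartition l n lam) (c : Fin l) (k : ℕ) :
    partialSum l n lam c k ≤ n := by
  calc partialSum l n lam c k
      ≤ ∑ c' ∈ Finset.univ.filter (fun c' : Fin l => c' ≤ c), compSize l n lam c' :=
        partialSum_le_blockLe hlam c k
    _ ≤ ∑ c' : Fin l, compSize l n lam c' :=
        Finset.sum_le_sum_of_subset (Finset.filter_subset _ _)
    _ = n := comp_total hlam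

lemma partialSum_lt_comp (hlam : IsMultipartition l n lam) {c c' : Fin l} (h : c < c')
    (k k' : ℕ) : partialSum l n lam c k ≤ partialSum l n lam c' k' := by
  calc partialSum l n lam c k
      ≤ ∑ c'' ∈ Finset.univ.filter (fun c'' : Fin l => c'' ≤ c), compSize l n lam c'' :=
        partialSum_le_blockLe hlam c k
    _ ≤ ∑ c'' ∈ Finset.univ.filter (fun c'' : Fin l => c'' < c'), compSize l n lam c'' := by
        apply Finset.sum_le_sum_of_subset
        intro a ha
        simp only [Finset.mem_filter, Finset.mem_univ, true_and] at ha ⊢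
        exact lt_of_le_of_lt ha h
    _ ≤ partialSum l n lam c' k' := Nat.le_add_right _ _

lemma partialSum_succ (f : Fin l → ℕ → ℕ) (c : Fin l) (k : ℕ) :
    partialSum l n f c (k + 1) = partialSum l n f c k + f c k := by
  unfold partialSum
  rw [Finset.sum_range_succ, Nat.add_assoc]

/-- a lexicographic separation bound. -/
lemma lex_sep (hlam : IsMultipartition l n lam) {c c' : Fin l} {r r' : ℕ}
    (hlex : c < c' ∨ (c = c' ∧ r < r')) (j : ℕ) (hj : j < lam c r) :
    partialSum l n lam c r + j < partialSum l n lam c' r' := by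
  have h1 : partialSum l n lam c r + j < partialSum l n lam c (r + 1) := by
    rw [partialSum_succ]; omega
  rcases hlex with h | ⟨rfl, h⟩
  · exact lt_of_lt_of_le h1 (partialSum_lt_comp hlam h _ _)
  · exact lt_of_lt_of_le h1 (partialSum_mono lam c h)

/-- the diagram as a finset. -/
def Dset (l n : ℕ) (lam : Fin l → ℕ → ℕ) : Finset (Node l) :=
  (Finset.univ ×ˢ Finset.range n ×ˢ Finset.range n).filter fun x => x.2.2 < lam x.1 x.2.1

/-- the (0-based) position of a node in the row-reading order. -/
def phi (l n : ℕ) (lam : Fin l → ℕ → ℕ) (x : Node l) : ℕ :=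
  partialSum l n lam x.1 x.2.1 + x.2.2

lemma mem_Dset (hlam : IsMultipartition l n lam) (x : Node l) :
    x ∈ Dset l n lam ↔ x.2.2 < lam x.1 x.2.1 := by
  unfold Dset
  simp only [Finset.mem_filter, Finset.mem_product, Finset.mem_univ, true_and,
    Finset.mem_range]
  constructor
  · rintro ⟨_, h⟩; exact h
  · intro h
    have h1 : x.2.1 < n := hlam.2.1 x.1 x.2.1 (by omega)
    have h2 : x.2.2 < n := lt_of_lt_of_le h (lam_le_n hlam _ _)
    exact ⟨⟨h1, h2⟩, h⟩

lemma card_Dset (hlam : IsMultipartition l n lam) : (Dset l n lam).card = n := by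
  unfold Dset
  rw [Finset.card_filter, Finset.sum_product]
  have : ∀ c : Fin l, ∑ y ∈ Finset.range n ×ˢ Finset.range n,
      (if y.2 < lam c y.1 then 1 else 0) = ∑ r ∈ Finset.range n, lam c r := by
    intro c
    rw [Finset.sum_product]
    congr 1
    ext r
    rw [← Finset.card_filter]
    have : (Finset.range n).filter (fun j => j < lam c r) = Finset.range (lam c r) := by
      ext j
      simp only [Finset.mem_filter, Finset.mem_range]
      have := lam_le_n hlam c r
      omega
    rw [this, Finset.card_range]
  rw [Finset.sum_congr rfl (fun c _ => this c)]
  exact hlam.2.2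

lemma phi_inj (hlam : IsMultipartition l n lam) :
    ∀ x ∈ Dset l n lam, ∀ y ∈ Dset l n lam, phi l n lam x = phi l n lam y → x = y := by
  rintro ⟨c, r, j⟩ hx ⟨c', r', j'⟩ hy heq
  rw [mem_Dset hlam] at hx hy
  simp only at hx hy
  unfold phi at heq
  simp only at heq
  have key : ∀ (a b : Fin l) (s s' i i' : ℕ), i < lam a s →
      (a < b ∨ (a = b ∧ s < s')) →
      partialSum l n lam a s + i < partialSum l n lam b s' + i' := by
    intro a b s s' i i' hi hlex
    have := lex_sep hlam hlex i hi
    omega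
  rcases lt_trichotomy c c' with hc | hc | hc
  · exact absurd heq (by have := key c c' r r' j j' hx (Or.inl hc); omega)
  · subst hc
    rcases lt_trichotomy r r' with hr | hr | hr
    · exact absurd heq (by have := key c c r r' j j' hx (Or.inr ⟨rfl, hr⟩); omega)
    · subst hr
      have : j = j' := by omega
      subst this; rfl
    · exact absurd heq.symm (by have := key c c r' r j' j hy (Or.inr ⟨rfl, hr⟩); omega)
  · exact absurd heq.symm (by have := key c' c r' r j' j hy (Or.inl hc); omega)

lemma phi_lt_n (hlam : IsMultipartition l n lam) (x : Node l) (hx : x ∈ Dset l n lam) :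
    phi l n lam x < n := by
  rw [mem_Dset hlam] at hx
  unfold phi
  have h1 : partialSum l n lam x.1 x.2.1 + x.2.2 < partialSum l n lam x.1 (x.2.1 + 1) := by
    rw [partialSum_succ]; omega
  exact lt_of_lt_of_le h1 (partialSum_le_n hlam _ _)

lemma phi_surj (hlam : IsMultipartition l n lam) (N : ℕ) (hN : N < n) :
    ∃ x ∈ Dset l n lam, phi l n lam x = N := by
  have himg : (Dset l n lam).image (phi l n lam) = Finset.range n := by
    apply Finset.eq_of_subset_of_card_le
    · intro a ha
      rw [Finset.mem_image] at ha
      obtain ⟨x, hx, rfl⟩ := ha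
      rw [Finset.mem_range]
      exact phi_lt_n hlam x hx
    · rw [Finset.card_range, Finset.card_image_of_injOn (phi_inj hlam), card_Dset hlam]
  have : N ∈ (Dset l n lam).image (phi l n lam) := by
    rw [himg, Finset.mem_range]; exact hN
  rw [Finset.mem_image] at this
  obtain ⟨x, hx, he⟩ := this
  exact ⟨x, hx, he⟩

lemma initTab_eq (x : Node l) (hx : x.2.2 < lam x.1 x.2.1) :
    initTab l n lam x = phi l n lam x + 1 := by
  unfold initTab phi partialSum
  rw [if_pos hx]

end Tableau

section Counting

variable {l n : ℕ} {lam : Fin l → ℕ → ℕ}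

lemma filter_range_eq_range {L : ℕ} (p : ℕ → Prop) [DecidablePred p]
    (hdc : ∀ i j, i ≤ j → j < L → p j → p i) :
    (Finset.range L).filter p = Finset.range ((Finset.range L).filter p).card := by
  set S := (Finset.range L).filter p with hS
  have hmem : ∀ i, i ∈ S ↔ i < L ∧ p i := by
    intro i; rw [hS, Finset.mem_filter, Finset.mem_range]
  ext i
  rw [Finset.mem_range, hmem]
  constructor
  · rintro ⟨hiL, hpi⟩
    have hsub : Finset.range (i + 1) ⊆ S := by
      intro k hk
      rw [Finset.mem_range] at hk
      rw [hmem]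
      exact ⟨by omega, hdc k i (by omega) hiL hpi⟩
    have := Finset.card_le_card hsub
    rw [Finset.card_range] at this
    omega
  · intro hi
    by_contra hcon
    have hsub : S ⊆ Finset.range i := by
      intro s hs
      rw [Finset.mem_range]
      by_contra hsi
      rw [hmem] at hs
      exact hcon ⟨by omega, hdc i s (by omega) hs.1 hs.2⟩
    have := Finset.card_le_card hsub
    rw [Finset.card_range] at this
    omega

lemma row_mono {T : Node l → ℕ} (hT : IsStdTab l n lam T) (c : Fin l) (r : ℕ) :
    ∀ i j : ℕ, i ≤ j → j < lam c r → T (c, r, i) ≤ T (c, r, j) := by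
  intro i j
  induction j with
  | zero => intro h _; have : i = 0 := by omega
            subst this; exact le_rfl
  | succ j ih =>
    intro hij hj
    rcases eq_or_lt_of_le hij with rfl | hij'
    · exact le_rfl
    · have h1 : T (c, r, i) ≤ T (c, r, j) := ih (by omega) (by omega)
      have h2 : T (c, r, j) < T (c, r, j + 1) := hT.2.2.1 c r j hj
      omega

lemma rest_eq_range {T : Node l → ℕ} (hT : IsStdTab l n lam T) (m : ℕ) (c : Fin l) (r : ℕ) :
    (Finset.range (lam c r)).filter (fun j => T (c, r, j) ≤ m) =
      Finset.range (restShape l lam T m c r) := by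
  unfold restShape
  exact filter_range_eq_range _ (fun i j hij hj hpj =>
    le_trans (row_mono hT c r i j hij hj) hpj)

lemma rest_le_lam (T : Node l → ℕ) (m : ℕ) (c : Fin l) (r : ℕ) :
    restShape l lam T m c r ≤ lam c r := by
  unfold restShape
  calc _ ≤ (Finset.range (lam c r)).card := Finset.card_filter_le _ _
  _ = lam c r := Finset.card_range _

lemma rest_zero (hlam : IsMultipartition l n lam) (T : Node l → ℕ) (m : ℕ) (c : Fin l)
    (r : ℕ) (h : n ≤ r) : restShape l lam T m c r = 0 := by
  unfold restShape
  rw [lam_row_zero hlam c r h]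
  simp

/-- the key counting identity. -/
lemma cnt_eq_tab (hlam : IsMultipartition l n lam) {T : Node l → ℕ}
    (hT : IsStdTab l n lam T) (dT : Equiv.Perm ℕ)
    (hTd : ∀ x, T x = dT (initTab l n lam x))
    (c₀ : Fin l) (k₀ : ℕ) (hk₀ : k₀ ≤ n) (j₀ : ℕ) (hj₀ : j₀ ≤ lam c₀ k₀) (m : ℕ) :
    cnt dT (partialSum l n lam c₀ k₀ + j₀) m =
      partialSum l n (restShape l lam T m) c₀ k₀ + min j₀ (restShape l lam T m c₀ k₀) := by
  set N := partialSum l n lam c₀ k₀ + j₀ with hN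
  have hNn : N ≤ n := by
    have h1 : N ≤ partialSum l n lam c₀ (k₀ + 1) := by rw [partialSum_succ]; omega
    exact le_trans h1 (partialSum_le_n hlam c₀ (k₀ + 1))
  -- Step 1: identify cnt with a count of diagram nodes
  have step1 : cnt dT N m =
      ((Dset l n lam).filter (fun x => phi l n lam x < N ∧ T x ≤ m)).card := by
    unfold cnt
    symm
    apply Finset.card_bij (fun x _ => phi l n lam x + 1)
    · intro x hx
      rw [Finset.mem_filter] at hx
      obtain ⟨hxD, hxphi, hxT⟩ := hx
      rw [Finset.mem_filter, Finset.mem_Icc]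
      have hin : initTab l n lam x = phi l n lam x + 1 :=
        initTab_eq x ((mem_Dset hlam x).mp hxD)
      refine ⟨⟨by omega, by omega⟩, ?_⟩
      rw [← hin, ← hTd x]
      exact hxT
    · intro x hx y hy he
      exact phi_inj hlam x (Finset.mem_filter.mp hx).1 y (Finset.mem_filter.mp hy).1
        (by omega)
    · intro a ha
      rw [Finset.mem_filter, Finset.mem_Icc] at ha
      obtain ⟨⟨ha1, ha2⟩, ha3⟩ := ha
      obtain ⟨x, hxD, hxphi⟩ := phi_surj hlam (a - 1) (by omega)
      refine ⟨x, ?_, by omega⟩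
      rw [Finset.mem_filter]
      refine ⟨hxD, by omega, ?_⟩
      rw [hTd x, initTab_eq x ((mem_Dset hlam x).mp hxD), hxphi,
        show a - 1 + 1 = a by omega]
      exact ha3
  -- Step 2: reduce to a double sum of row counts
  have step2 : ((Dset l n lam).filter (fun x => phi l n lam x < N ∧ T x ≤ m)).card =
      ∑ c : Fin l, ∑ r ∈ Finset.range n,
        ((Finset.range (lam c r)).filter
          (fun j => partialSum l n lam c r + j < N ∧ T (c, r, j) ≤ m)).card := by
    unfold Dset
    rw [Finset.filter_filter, Finset.card_filter, Finset.sum_product]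
    apply Finset.sum_congr rfl
    intro c _
    rw [Finset.sum_product]
    apply Finset.sum_congr rfl
    intro r _
    rw [← Finset.card_filter]
    congr 1
    ext j
    simp only [Finset.mem_filter, Finset.mem_range]
    unfold phi
    simp only
    constructor
    · rintro ⟨h1, h2, h3, h4⟩; exact ⟨h2, h3, h4⟩
    · rintro ⟨h1, h2, h3⟩
      exact ⟨lt_of_lt_of_le h1 (lam_le_n hlam c r), h1, h2, h3⟩
  -- Step 3: evaluate the row counts
  have hbefore : ∀ (c : Fin l) (r : ℕ), (c < c₀ ∨ (c = c₀ ∧ r < k₀)) →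
      ((Finset.range (lam c r)).filter
        (fun j => partialSum l n lam c r + j < N ∧ T (c, r, j) ≤ m)).card =
      restShape l lam T m c r := by
    intro c r hlex
    unfold restShape
    congr 1
    apply Finset.filter_congr
    intro j hj
    rw [Finset.mem_range] at hj
    have h1 : partialSum l n lam c r + j < partialSum l n lam c₀ k₀ :=
      lex_sep hlam hlex j hj
    simp only [show partialSum l n lam c r + j < N from by omega, true_and]
  have hafter : ∀ (c : Fin l) (r : ℕ), (c₀ < c ∨ (c = c₀ ∧ k₀ < r)) →
      ((Finset.range (lam c r)).filter
        (fun j => partialSum l n lam c r + j < N ∧ T (c, r, j) ≤ m)).card = 0 := by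
    intro c r hlex
    rw [Finset.card_eq_zero, Finset.eq_empty_iff_forall_notMem]
    intro j hj
    rw [Finset.mem_filter, Finset.mem_range] at hj
    obtain ⟨hjl, hjN, _⟩ := hj
    have hge : partialSum l n lam c₀ (k₀ + 1) ≤ partialSum l n lam c r := by
      rcases hlex with h | ⟨rfl, h⟩
      · exact partialSum_lt_comp hlam h _ _
      · exact partialSum_mono lam c (by omega)
    rw [partialSum_succ] at hge
    omega
  have hequal :
      ((Finset.range (lam c₀ k₀)).filter
        (fun j => partialSum l n lam c₀ k₀ + j < N ∧ T (c₀, k₀, j) ≤ m)).card =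
      min j₀ (restShape l lam T m c₀ k₀) := by
    have he : (Finset.range (lam c₀ k₀)).filter
        (fun j => partialSum l n lam c₀ k₀ + j < N ∧ T (c₀, k₀, j) ≤ m) =
        Finset.range (min j₀ (restShape l lam T m c₀ k₀)) := by
      ext j
      simp only [Finset.mem_filter, Finset.mem_range]
      have hrange := rest_eq_range hT m c₀ k₀
      constructor
      · rintro ⟨h1, h2, h3⟩
        have : j ∈ (Finset.range (lam c₀ k₀)).filter (fun j => T (c₀, k₀, j) ≤ m) := by
          rw [Finset.mem_filter, Finset.mem_range]; exact ⟨h1, h3⟩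
        rw [hrange, Finset.mem_range] at this
        omega
      · intro hj
        have hj1 : j < j₀ := by omega
        have hj2 : j < restShape l lam T m c₀ k₀ := by omega
        have : j ∈ (Finset.range (lam c₀ k₀)).filter (fun j => T (c₀, k₀, j) ≤ m) := by
          rw [hrange, Finset.mem_range]; exact hj2
        rw [Finset.mem_filter, Finset.mem_range] at this
        exact ⟨this.1, by omega, this.2⟩
    rw [he, Finset.card_range]
  -- Step 4: assemble
  rw [step1, step2]
  rw [← Finset.sum_filter_add_sum_filter_not Finset.univ (fun c : Fin l => c < c₀)]
  have hfilter_not : Finset.univ.filter (fun c : Fin l => ¬c < c₀) =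
      insert c₀ (Finset.univ.filter (fun c : Fin l => c₀ < c)) := by
    ext a
    simp only [Finset.mem_filter, Finset.mem_univ, true_and, Finset.mem_insert]
    constructor
    · intro h
      rcases eq_or_lt_of_le (le_of_not_gt h) with h' | h'
      · exact Or.inl h'.symm
      · exact Or.inr h'
    · rintro (rfl | h)
      · exact lt_irrefl a
      · exact not_lt_of_gt h
  rw [hfilter_not, Finset.sum_insert (by simp)]
  have hgt_zero : ∑ c ∈ Finset.univ.filter (fun c : Fin l => c₀ < c),
      (∑ r ∈ Finset.range n, ((Finset.range (lam c r)).filter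
        (fun j => partialSum l n lam c r + j < N ∧ T (c, r, j) ≤ m)).card) = 0 := by
    apply Finset.sum_eq_zero
    intro c hc
    rw [Finset.mem_filter] at hc
    apply Finset.sum_eq_zero
    intro r _
    exact hafter c r (Or.inl hc.2)
  have hlt_sum : ∑ c ∈ Finset.univ.filter (fun c : Fin l => c < c₀),
      (∑ r ∈ Finset.range n, ((Finset.range (lam c r)).filter
        (fun j => partialSum l n lam c r + j < N ∧ T (c, r, j) ≤ m)).card) =
      ∑ c ∈ Finset.univ.filter (fun c : Fin l => c < c₀),
        compSize l n (restShape l lam T m) c := by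
    apply Finset.sum_congr rfl
    intro c hc
    rw [Finset.mem_filter] at hc
    unfold compSize
    apply Finset.sum_congr rfl
    intro r _
    exact hbefore c r (Or.inl hc.2)
  have hc₀_sum : ∑ r ∈ Finset.range n, ((Finset.range (lam c₀ r)).filter
      (fun j => partialSum l n lam c₀ r + j < N ∧ T (c₀, r, j) ≤ m)).card =
      (∑ r ∈ Finset.range k₀, restShape l lam T m c₀ r) +
        min j₀ (restShape l lam T m c₀ k₀) := by
    rw [← Finset.sum_range_add_sum_Ico _ hk₀]
    congr 1
    · apply Finset.sum_congr rfl
      intro r hr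
      rw [Finset.mem_range] at hr
      exact hbefore c₀ r (Or.inr ⟨rfl, hr⟩)
    · rcases eq_or_lt_of_le hk₀ with rfl | hk₀'
      · simp only [Finset.Ico_self, Finset.sum_empty]
        have h1 : lam c₀ k₀ = 0 := lam_row_zero hlam c₀ k₀ le_rfl
        omega
      · rw [Finset.sum_eq_single_of_mem k₀ (Finset.mem_Ico.mpr ⟨le_rfl, hk₀'⟩)]
        · exact hequal
        · intro r hr hne
          rw [Finset.mem_Ico] at hr
          exact hafter c₀ r (Or.inr ⟨rfl, by omega⟩)
  rw [hgt_zero, hlt_sum, hc₀_sum]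
  unfold partialSum
  omega

end Counting

section Final

variable {l n : ℕ} {lam : Fin l → ℕ → ℕ}

lemma total_rep (hlam : IsMultipartition l n lam) (hl : 0 < l) :
    ∃ c₀ : Fin l, partialSum l n lam c₀ n = n := by
  obtain ⟨l', rfl⟩ : ∃ l', l = l' + 1 := ⟨l - 1, by omega⟩
  refine ⟨Fin.last l', ?_⟩
  have huniv : Finset.univ.filter (fun c' : Fin (l' + 1) => c' ≤ Fin.last l') =
      Finset.univ := by
    ext a; simp [Fin.le_last]
  have h1 : partialSum (l' + 1) n lam (Fin.last l') n =
      (∑ c' ∈ Finset.univ.filter (fun c' : Fin (l' + 1) => c' < Fin.last l'),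
        compSize (l' + 1) n lam c') + compSize (l' + 1) n lam (Fin.last l') := rfl
  rw [h1, add_comm, ← Finset.sum_insert (show Fin.last l' ∉
      Finset.univ.filter (fun c' : Fin (l' + 1) => c' < Fin.last l') by simp),
    ← filter_le_eq_insert (Fin.last l'), huniv]
  exact comp_total hlam

lemma tabdom_iff_domP (hlam : IsMultipartition l n lam) {S T : Node l → ℕ}
    (hS : IsStdTab l n lam S) (hT : IsStdTab l n lam T) (dS dT : Equiv.Perm ℕ)
    (hdS : InSymm n dS) (hdT : InSymm n dT)
    (hSd : ∀ x, S x = dS (initTab l n lam x)) (hTd : ∀ x, T x = dT (initTab l n lam x)) :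
    TabDom l n lam S T ↔ DomP dS dT := by
  constructor
  · intro h N m
    have hle_n : ∀ N', N' ≤ n → cnt dT N' m ≤ cnt dS N' m := by
      intro N' hN'
      rcases Nat.eq_zero_or_pos l with rfl | hl
      · have hn0 : n = 0 := by
          have := hlam.2.2
          simpa using this.symm
        rw [show N' = 0 by omega, cnt_zero, cnt_zero]
      have hrep : ∃ (c₀ : Fin l) (k₀ j₀ : ℕ), k₀ ≤ n ∧ j₀ ≤ lam c₀ k₀ ∧
          N' = partialSum l n lam c₀ k₀ + j₀ := by
        rcases lt_or_eq_of_le hN' with hlt | heq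
        · obtain ⟨⟨c, r, j⟩, hx, hphi⟩ := phi_surj hlam N' hlt
          have hj : j < lam c r := (mem_Dset hlam _).mp hx
          have hr : r < n := hlam.2.1 c r (by omega)
          unfold phi at hphi
          simp only at hphi
          exact ⟨c, r, j, by omega, by omega, hphi.symm⟩
        · obtain ⟨c₀, hc₀⟩ := total_rep hlam hl
          exact ⟨c₀, n, 0, le_rfl, Nat.zero_le _, by omega⟩
      obtain ⟨c₀, k₀, j₀, hk₀, hj₀, rfl⟩ := hrep
      rw [cnt_eq_tab hlam hT dT hTd c₀ k₀ hk₀ j₀ hj₀ m,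
        cnt_eq_tab hlam hS dS hSd c₀ k₀ hk₀ j₀ hj₀ m]
      have h1 := h m c₀ k₀
      have h2 := h m c₀ (k₀ + 1)
      rw [partialSum_succ, partialSum_succ] at h2
      omega
    rcases le_or_gt N n with h' | h'
    · exact hle_n N h'
    · have key : ∀ d, cnt dT (n + d) m ≤ cnt dS (n + d) m := by
        intro d
        induction d with
        | zero => exact hle_n n le_rfl
        | succ d ih =>
          rw [show n + (d + 1) = (n + d) + 1 from rfl, cnt_succ, cnt_succ]
          have hout : n + d + 1 ∉ Finset.Icc 1 n := by rw [Finset.mem_Icc]; omega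
          rw [hdT _ hout, hdS _ hout]
          omega
      have := key (N - n)
      rw [show n + (N - n) = N from by omega] at this
      exact this
  · intro h m c k
    set k' := min k n with hk'
    have reduce : ∀ U : Node l → ℕ,
        partialSum l n (restShape l lam U m) c k = partialSum l n (restShape l lam U m) c k' := by
      intro U
      rcases le_or_gt k n with hkn | hkn
      · rw [hk', min_eq_left hkn]
      · rw [hk', min_eq_right (by omega)]
        unfold partialSum
        congr 1
        refine (Finset.sum_subset (Finset.range_subset_range.mpr (by omega)) ?_).symm
        intro x hx hnx
        rw [Finset.mem_range] at hx hnx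
        exact rest_zero hlam U m c x (by omega)
    have hT1 := cnt_eq_tab hlam hT dT hTd c k' (min_le_right k n) 0 (Nat.zero_le _) m
    have hS1 := cnt_eq_tab hlam hS dS hSd c k' (min_le_right k n) 0 (Nat.zero_le _) m
    have hdom := h (partialSum l n lam c k' + 0) m
    rw [reduce T, reduce S]
    omega

end Final

end Paper

namespace Paper

theorem statement5 (l n : ℕ) (lam : Fin l → ℕ → ℕ) (hlam : IsMultipartition l n lam)
    (S T : Node l → ℕ) (hS : IsStdTab l n lam S) (hT : IsStdTab l n lam T)
    (dS dT : Equiv.Perm ℕ) (hdS : InSymm n dS) (hdT : InSymm n dT)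
    (hSd : actT l (initTab l n lam) dS = S) (hTd : actT l (initTab l n lam) dT = T) :
    TabDom l n lam S T ↔ BruhatLE n dS dT := by
  have hSd' : ∀ x, S x = dS (initTab l n lam x) := fun x => (congrFun hSd x).symm
  have hTd' : ∀ x, T x = dT (initTab l n lam x) := fun x => (congrFun hTd x).symm
  exact (tabdom_iff_domP hlam hS hT dS dT hdS hdT hSd' hTd').trans
    (bruhat_iff_dom n dS dT hdS hdT).symm

end Paper
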